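/- arXiv:1510.08883 — 5 statements merged into one kernel-verified Lean document; each statement's English description precedes it below -/
import Mathlib

section
/- Let C be a linear code over a finite field F with encoder C: F^k → F^n, let i ∈ [k], and let S ⊆ [n] be a recovery set for x_i. If there exists ℓ ∈ S such that y_ℓ is not uniquely determined by x_i and y|_{S∖{ℓ}} (i.e., there exist x_1, x_2 with (x_1)_i = (x_2)_i, C(x_1) and C(x_2) agreeing on S∖{ℓ} but differing at ℓ), then S∖{ℓ} is also a recovery set for x_i. -/
def IsRecoverySet {σ : Type*} {k n : ℕ}
    (C : (Fin k → σ) → (Fin n → σ)) (i : Fin k) (S : Finset (Fin n)) : Prop :=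
  ∀ x₁ x₂ : Fin k → σ, (∀ j ∈ S, C x₁ j = C x₂ j) → x₁ i = x₂ i

/-- If `S` is a recovery set for coordinate `i` of an injective linear code `C`, and
there is `ℓ ∈ S` such that `y ℓ` is not uniquely determined by `x i` and `y` on
`S \ {ℓ}`, then `S \ {ℓ}` is also a recovery set for `x i`. -/
theorem stmt_3 {F : Type*} [Field F] [Fintype F] {k n : ℕ}
    (C : (Fin k → F) →ₗ[F] (Fin n → F)) (hinj : Function.Injective C)
    (i : Fin k) (S : Finset (Fin n)) (ℓ : Fin n) (hℓ : ℓ ∈ S)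
    (hrec : IsRecoverySet (⇑C) i S)
    (hnotdet : ∃ x₁ x₂ : Fin k → F, x₁ i = x₂ i ∧
      (∀ j ∈ S.erase ℓ, C x₁ j = C x₂ j) ∧ C x₁ ℓ ≠ C x₂ ℓ) :
    IsRecoverySet (⇑C) i (S.erase ℓ) := by
  obtain ⟨x₁, x₂, hxi, hxS, hxℓ⟩ := hnotdet
  set z := x₁ - x₂ with hz
  have hzi : z i = 0 := by simp [hz, hxi]
  have hzS : ∀ j ∈ S.erase ℓ, C z j = 0 := by
    intro j hj
    simp [hz, map_sub, sub_eq_zero, hxS j hj]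
  have hzℓ : C z ℓ ≠ 0 := by
    simp [hz, map_sub, sub_eq_zero, hxℓ]
  intro u₁ u₂ hu
  set w := u₁ - u₂ with hw
  have hwS : ∀ j ∈ S.erase ℓ, C w j = 0 := by
    intro j hj
    simp [hw, map_sub, sub_eq_zero, hu j hj]
  set c := C w ℓ / C z ℓ with hc
  have key : ∀ j ∈ S, C (w - c • z) j = C 0 j := by
    intro j hj
    rcases eq_or_ne j ℓ with rfl | hne
    · simp [map_sub, map_smul, hc, div_mul_cancel₀ _ hzℓ]
    · simp [map_sub, map_smul, hwS j (Finset.mem_erase.mpr ⟨hne, hj⟩),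
        hzS j (Finset.mem_erase.mpr ⟨hne, hj⟩)]
  have := hrec (w - c • z) 0 key
  have hwi : w i = 0 := by
    simpa [hzi] using this
  have : u₁ i - u₂ i = 0 := hwi
  exact sub_eq_zero.mp this
end

section
/- Let C be a linear (k,n,r,t) batch code over a finite field F with minimum distance d. Then n ≥ max over integers β with 1 ≤ β ≤ t of (β−1)(⌈k/(rβ−β+1)⌉ − 1) + k + d − 1. -/
def IsBatchCode {σ : Type*} {k n : ℕ}
    (C : (Fin k → σ) → (Fin n → σ)) (r t : ℕ) : Prop :=
  ∀ f : Fin t → Fin k, ∃ S : Fin t → Finset (Fin n),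
    (∀ a b : Fin t, a ≠ b → Disjoint (S a) (S b)) ∧
    (∀ a, (S a).card ≤ r) ∧
    (∀ a, IsRecoverySet C (f a) (S a))

def natCeilDiv (a b : ℕ) : ℕ := (a + b - 1) / b

section Aux

open Submodule Module

variable {F : Type*} [Field F] {k n : ℕ}

/-- The `j`-th row functional of the generator matrix. -/
noncomputable def rowFun (C : (Fin k → F) →ₗ[F] (Fin n → F)) (j : Fin n) :
    (Fin k → F) →ₗ[F] F :=
  (LinearMap.proj j).comp C

variable (C : (Fin k → F) →ₗ[F] (Fin n → F))

lemma mem_span_of_recovery {i : Fin k} {S : Finset (Fin n)}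
    (h : IsRecoverySet (⇑C) i S) :
    (LinearMap.proj i : (Fin k → F) →ₗ[F] F) ∈ span F (rowFun C '' ↑S) := by
  have hker : (⨅ j : ↥S, LinearMap.ker (rowFun C j)) ≤
      LinearMap.ker (LinearMap.proj i : (Fin k → F) →ₗ[F] F) := by
    intro x hx
    simp only [Submodule.mem_iInf, LinearMap.mem_ker] at hx
    have hx0 : x i = (0 : Fin k → F) i := by
      refine h x 0 fun j hj => ?_
      have := hx ⟨j, hj⟩
      simpa [rowFun] using this
    simpa using hx0
  have := mem_span_of_iInf_ker_le_ker (𝕜 := F) hker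
  rwa [Set.image_eq_range]

lemma span_proj_top :
    span F (Set.range fun i : Fin k =>
      (LinearMap.proj i : (Fin k → F) →ₗ[F] F)) = ⊤ := by
  rw [eq_top_iff]
  rintro K -
  apply mem_span_of_iInf_ker_le_ker (𝕜 := F)
  intro x hx
  simp only [Submodule.mem_iInf, LinearMap.mem_ker, LinearMap.proj_apply] at hx
  have : x = 0 := funext hx
  simp [this]

lemma finrank_dual_space :
    finrank F ((Fin k → F) →ₗ[F] F) = k := by
  rw [Module.finrank_linearMap_self]
  simp

lemma exists_proj_not_mem {T : Finset (Fin n)}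
    (h : finrank F (span F (rowFun C '' ↑T)) < k) :
    ∃ i : Fin k,
      (LinearMap.proj i : (Fin k → F) →ₗ[F] F) ∉ span F (rowFun C '' ↑T) := by
  by_contra hc
  push_neg at hc
  have htop : span F (rowFun C '' (↑T : Set (Fin n))) = ⊤ := by
    rw [eq_top_iff, ← span_proj_top (F := F) (k := k), span_le]
    rintro _ ⟨i, rfl⟩
    exact hc i
  rw [htop, finrank_top, finrank_dual_space] at h
  omega

lemma span_rows_top (hinj : Function.Injective C) :
    span F (rowFun C '' ↑(Finset.univ : Finset (Fin n))) = ⊤ := by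
  rw [eq_top_iff, ← span_proj_top (F := F) (k := k), span_le]
  rintro _ ⟨i, rfl⟩
  have hmem : (LinearMap.proj i : (Fin k → F) →ₗ[F] F) ∈
      span F (Set.range (rowFun C)) := by
    apply mem_span_of_iInf_ker_le_ker (𝕜 := F)
    intro x hx
    simp only [Submodule.mem_iInf, LinearMap.mem_ker] at hx
    have hCx : C x = 0 := by
      funext j
      simpa [rowFun] using hx j
    have hx0 : x = 0 := by
      apply hinj
      simp [hCx]
    simp [hx0, LinearMap.mem_ker]
  simpa [Set.image_univ] using hmem

lemma rank_union_le (T B : Finset (Fin n)) :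
    finrank F (span F (rowFun C '' ↑(T ∪ B))) ≤
      finrank F (span F (rowFun C '' ↑T)) + B.card := by
  classical
  have h1 : rowFun C '' (↑(T ∪ B) : Set (Fin n)) =
      rowFun C '' ↑T ∪ rowFun C '' ↑B := by
    rw [Finset.coe_union, Set.image_union]
  rw [h1, span_union]
  refine le_trans (Submodule.finrank_add_le_finrank_add_finrank _ _) ?_
  have h2 : finrank F (span F (rowFun C '' ↑B)) ≤ B.card := by
    have h3 : rowFun C '' ↑B = ↑(B.image (rowFun C)) := by simp
    rw [h3]
    exact le_trans (finrank_span_finset_le_card _) Finset.card_image_le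
  omega

lemma exists_min_subset {α : Type*} [DecidableEq α] (P : Finset α → Prop)
    (S : Finset α) (hS : P S) :
    ∃ A, A ⊆ S ∧ P A ∧ ∀ B, B ⊆ S → P B → A.card ≤ B.card := by
  classical
  obtain ⟨A, hA, hmin⟩ := Finset.exists_min_image (S.powerset.filter P)
    Finset.card ⟨S, by simp [hS]⟩
  simp only [Finset.mem_filter, Finset.mem_powerset] at hA
  exact ⟨A, hA.1, hA.2, fun B hB hPB =>
    hmin B (by simp [Finset.mem_filter, Finset.mem_powerset, hB, hPB])⟩

lemma min_aux (T U₀ : Finset (Fin n)) {i : Fin k}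
    (hi : (LinearMap.proj i : (Fin k → F) →ₗ[F] F) ∉ span F (rowFun C '' ↑T))
    (hU : (LinearMap.proj i : (Fin k → F) →ₗ[F] F) ∈
      span F (rowFun C '' ↑(T ∪ U₀))) :
    ∃ A, A ⊆ U₀ ∧ Disjoint A T ∧ A.Nonempty ∧
      ((LinearMap.proj i : (Fin k → F) →ₗ[F] F) ∈
        span F (rowFun C '' ↑(T ∪ A))) ∧
      ∀ j ∈ A, (LinearMap.proj i : (Fin k → F) →ₗ[F] F) ∉
        span F (rowFun C '' ↑(T ∪ A.erase j)) := by
  classical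
  obtain ⟨A, hAS, hPA, hmin⟩ := exists_min_subset
    (fun A => (LinearMap.proj i : (Fin k → F) →ₗ[F] F) ∈
      span F (rowFun C '' ↑(T ∪ A))) U₀ hU
  have hdisj : Disjoint A T := by
    have hP : (LinearMap.proj i : (Fin k → F) →ₗ[F] F) ∈
        span F (rowFun C '' ↑(T ∪ (A \ T))) := by
      rwa [Finset.union_sdiff_self_eq_union]
    have hle := hmin (A \ T) (le_trans Finset.sdiff_subset hAS) hP
    have heq : A \ T = A :=
      Finset.eq_of_subset_of_card_le Finset.sdiff_subset hle
    exact Finset.sdiff_eq_self_iff_disjoint.mp heq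
  have hne : A.Nonempty := by
    rcases A.eq_empty_or_nonempty with rfl | h
    · exact absurd (by simpa using hPA) hi
    · exact h
  refine ⟨A, hAS, hdisj, hne, hPA, fun j hj hmem => ?_⟩
  have h1 := hmin (A.erase j) (le_trans (Finset.erase_subset _ _) hAS) hmem
  have h2 := Finset.card_erase_of_mem hj
  have h3 : 1 ≤ A.card := Finset.card_pos.mpr ⟨j, hj⟩
  omega

lemma step_core (T B A : Finset (Fin n)) {i : Fin k} {j : Fin n} (hj : j ∈ A)
    (he : (LinearMap.proj i : (Fin k → F) →ₗ[F] F) ∈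
      span F (rowFun C '' ↑(T ∪ B)))
    (hA : (LinearMap.proj i : (Fin k → F) →ₗ[F] F) ∈
      span F (rowFun C '' ↑(T ∪ A)))
    (hmin : (LinearMap.proj i : (Fin k → F) →ₗ[F] F) ∉
      span F (rowFun C '' ↑(T ∪ A.erase j))) :
    finrank F (span F (rowFun C '' ↑(T ∪ B ∪ A))) + 1 ≤
      finrank F (span F (rowFun C '' ↑(T ∪ B))) + A.card := by
  classical
  have hspan : span F (rowFun C '' ↑(T ∪ B ∪ A)) ≤
      span F (rowFun C '' ↑(T ∪ B ∪ A.erase j)) := by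
    rw [span_le]
    rintro x ⟨y, hy, rfl⟩
    have hy' : y ∈ T ∪ B ∪ A := Finset.mem_coe.mp hy
    by_cases hyj : y = j
    · subst hyj
      have h1 : (LinearMap.proj i : (Fin k → F) →ₗ[F] F) ∈
          span F (insert (rowFun C y) (rowFun C '' ↑(T ∪ A.erase y))) := by
        refine span_mono ?_ hA
        rintro z ⟨w, hw, rfl⟩
        have hw' : w ∈ T ∪ A := Finset.mem_coe.mp hw
        by_cases hwy : w = y
        · subst hwy; exact Set.mem_insert _ _
        · refine Set.mem_insert_of_mem _ ⟨w, ?_, rfl⟩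
          refine Finset.mem_coe.mpr ?_
          rcases Finset.mem_union.mp hw' with h | h
          · exact Finset.mem_union_left _ h
          · exact Finset.mem_union_right _ (Finset.mem_erase.mpr ⟨hwy, h⟩)
      have h2 : rowFun C y ∈ span F
          (insert (LinearMap.proj i : (Fin k → F) →ₗ[F] F)
            (rowFun C '' ↑(T ∪ A.erase y))) :=
        mem_span_insert_exchange h1 hmin
      have h3 : span F (insert (LinearMap.proj i : (Fin k → F) →ₗ[F] F)
          (rowFun C '' ↑(T ∪ A.erase y))) ≤
          span F (rowFun C '' ↑(T ∪ B ∪ A.erase y)) := by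
        rw [span_le, Set.insert_subset_iff]
        constructor
        · refine span_mono ?_ he
          refine Set.image_mono ?_
          intro z hz
          have hz' : z ∈ T ∪ B := Finset.mem_coe.mp hz
          exact Finset.mem_coe.mpr (Finset.mem_union_left _ hz')
        · refine Set.Subset.trans ?_ subset_span
          refine Set.image_mono ?_
          intro z hz
          have hz' : z ∈ T ∪ A.erase y := Finset.mem_coe.mp hz
          refine Finset.mem_coe.mpr ?_
          rcases Finset.mem_union.mp hz' with h | h
          · exact Finset.mem_union_left _ (Finset.mem_union_left _ h)
          · exact Finset.mem_union_right _ h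
      exact h3 h2
    · refine subset_span ⟨y, ?_, rfl⟩
      refine Finset.mem_coe.mpr ?_
      rcases Finset.mem_union.mp hy' with h | h
      · exact Finset.mem_union_left _ h
      · exact Finset.mem_union_right _ (Finset.mem_erase.mpr ⟨hyj, h⟩)
  have h3 := Submodule.finrank_mono hspan
  have h4 := rank_union_le C (T ∪ B) (A.erase j)
  have h5 := Finset.card_erase_of_mem hj
  have h6 : 1 ≤ A.card := Finset.card_pos.mpr ⟨j, hj⟩
  omega

lemma roundStep {T : Finset (Fin n)} {i : Fin k}
    (hi : (LinearMap.proj i : (Fin k → F) →ₗ[F] F) ∉ span F (rowFun C '' ↑T))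
    {t r : ℕ} (S : Fin t → Finset (Fin n))
    (hdisj : ∀ a b : Fin t, a ≠ b → Disjoint (S a) (S b))
    (hcard : ∀ a, (S a).card ≤ r)
    (hrec : ∀ a, (LinearMap.proj i : (Fin k → F) →ₗ[F] F) ∈
      span F (rowFun C '' ↑(S a))) :
    ∀ β : ℕ, 1 ≤ β → β ≤ t →
      ∃ B : Finset (Fin n), Disjoint T B ∧ B.card ≤ r * β ∧
        (∀ a : Fin t, β ≤ (a : ℕ) → Disjoint B (S a)) ∧
        ((LinearMap.proj i : (Fin k → F) →ₗ[F] F) ∈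
          span F (rowFun C '' ↑(T ∪ B))) ∧
        finrank F (span F (rowFun C '' ↑(T ∪ B))) + β ≤
          finrank F (span F (rowFun C '' ↑T)) + B.card + 1 := by
  classical
  intro β hβ1
  induction β, hβ1 using Nat.le_induction with
  | base =>
    intro h1t
    set a0 : Fin t := ⟨0, h1t⟩
    have hU : (LinearMap.proj i : (Fin k → F) →ₗ[F] F) ∈
        span F (rowFun C '' ↑(T ∪ S a0)) := by
      refine span_mono ?_ (hrec a0)
      refine Set.image_mono ?_
      intro z hz
      exact Finset.mem_coe.mpr (Finset.mem_union_right _ (Finset.mem_coe.mp hz))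
    obtain ⟨A, hAS, hAT, hAne, hPA, hAmin⟩ := min_aux C T (S a0) hi hU
    refine ⟨A, hAT.symm, ?_, ?_, hPA, ?_⟩
    · calc A.card ≤ (S a0).card := Finset.card_le_card hAS
        _ ≤ r := hcard a0
        _ = r * 1 := (mul_one r).symm
    · intro a ha
      have hne : a0 ≠ a := by
        intro h
        rw [← h] at ha
        simp [a0] at ha
      exact Finset.disjoint_of_subset_left hAS (hdisj a0 a hne)
    · have := rank_union_le C T A
      omega
  | succ β hβ1 ih =>
    intro hβt
    obtain ⟨B, hTB, hBcard, hBS, hBe, hBrank⟩ := ih (by omega)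
    set aβ : Fin t := ⟨β, hβt⟩
    have hU : (LinearMap.proj i : (Fin k → F) →ₗ[F] F) ∈
        span F (rowFun C '' ↑(T ∪ S aβ)) := by
      refine span_mono ?_ (hrec aβ)
      refine Set.image_mono ?_
      intro z hz
      exact Finset.mem_coe.mpr (Finset.mem_union_right _ (Finset.mem_coe.mp hz))
    obtain ⟨A, hAS, hAT, hAne, hPA, hAmin⟩ := min_aux C T (S aβ) hi hU
    obtain ⟨j, hj⟩ := hAne
    have hBA : Disjoint B A :=
      Finset.disjoint_of_subset_right hAS (hBS aβ (le_refl _))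
    have hrank := step_core C T B A hj hBe hPA (hAmin j hj)
    refine ⟨B ∪ A, ?_, ?_, ?_, ?_, ?_⟩
    · rw [Finset.disjoint_union_right]
      exact ⟨hTB, hAT.symm⟩
    · have h1 : A.card ≤ r := le_trans (Finset.card_le_card hAS) (hcard aβ)
      have h2 : (B ∪ A).card ≤ B.card + A.card := Finset.card_union_le _ _
      have h3 : r * (β + 1) = r * β + r := by ring
      omega
    · intro a ha
      rw [Finset.disjoint_union_left]
      constructor
      · exact hBS a (by omega)
      · refine Finset.disjoint_of_subset_left hAS (hdisj aβ a ?_)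
        intro h
        have : (aβ : ℕ) = (a : ℕ) := by rw [h]
        simp [aβ] at this
        omega
    · rw [← Finset.union_assoc]
      refine span_mono ?_ hBe
      refine Set.image_mono ?_
      intro z hz
      have hz' : z ∈ T ∪ B := Finset.mem_coe.mp hz
      exact Finset.mem_coe.mpr (Finset.mem_union_left _ hz')
    · rw [← Finset.union_assoc]
      have hcardBA : (B ∪ A).card = B.card + A.card :=
        Finset.card_union_of_disjoint hBA
      omega

end Aux

/-- A linear `(k,n,r,t)` batch code with minimum distance `d` satisfies, for every
integer `1 ≤ β ≤ t`, `n ≥ (β−1)(⌈k/(rβ−β+1)⌉ − 1) + k + d − 1`. -/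
theorem stmt_6 {F : Type*} [Field F] [Fintype F] [DecidableEq F] {k n r t d : ℕ}
    (hr : 1 ≤ r) (ht : 1 ≤ t) (hk : 1 ≤ k)
    (C : (Fin k → F) →ₗ[F] (Fin n → F)) (hinj : Function.Injective C)
    (hbatch : IsBatchCode (⇑C) r t)
    (hd_le : ∀ x : Fin k → F, x ≠ 0 → d ≤ hammingNorm (C x))
    (hd_eq : ∃ x : Fin k → F, x ≠ 0 ∧ hammingNorm (C x) = d) :
    ∀ β : ℕ, 1 ≤ β → β ≤ t →
      (β - 1) * (natCeilDiv k (r * β - β + 1) - 1) + k + d ≤ n + 1 := by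
  classical
  open Submodule Module in
  intro β hβ1 hβt
  set s : ℕ := r * β - β + 1 with hs_def
  have hβrβ : β ≤ r * β := Nat.le_mul_of_pos_left β hr
  have hs1 : 1 ≤ s := by omega
  have hrβ : r * β = s + (β - 1) := by omega
  -- the outer greedy construction
  have outer : ∀ m : ℕ, m * s ≤ k - 1 → ∃ T : Finset (Fin n),
      finrank F (span F (rowFun C '' ↑T)) ≤ m * s ∧
      finrank F (span F (rowFun C '' ↑T)) + m * (β - 1) ≤ T.card := by
    intro m
    induction m with
    | zero =>
      intro _
      refine ⟨∅, ?_, ?_⟩ <;> simp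
    | succ m ih =>
      intro hm1
      have hmono : m * s ≤ (m + 1) * s := by
        have : (m + 1) * s = m * s + s := by ring
        omega
      obtain ⟨T, hTrank, hTdef⟩ := ih (le_trans hmono hm1)
      have hsucc : (m + 1) * s = m * s + s := by ring
      have hrankk : finrank F (span F (rowFun C '' ↑T)) < k := by omega
      obtain ⟨i, hi⟩ := exists_proj_not_mem C hrankk
      obtain ⟨S, hdisj, hcard, hrec⟩ := hbatch (fun _ => i)
      have hrec' : ∀ a, (LinearMap.proj i : (Fin k → F) →ₗ[F] F) ∈
          span F (rowFun C '' ↑(S a)) :=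
        fun a => mem_span_of_recovery C (hrec a)
      obtain ⟨B, hTB, hBcard, _, _, hBrank⟩ :=
        roundStep C hi S hdisj hcard hrec' β hβ1 hβt
      refine ⟨T ∪ B, ?_, ?_⟩
      · omega
      · have hcardU : (T ∪ B).card = T.card + B.card :=
          Finset.card_union_of_disjoint hTB
        have hmul : (m + 1) * (β - 1) = m * (β - 1) + (β - 1) := by ring
        omega
  -- apply with the right number of rounds
  set q : ℕ := natCeilDiv k s with hq_def
  have hq1 : 1 ≤ q := by
    rw [hq_def]
    unfold natCeilDiv
    rw [Nat.le_div_iff_mul_le (by omega)]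
    omega
  have hqs : q * s ≤ k + s - 1 := by
    rw [hq_def]
    unfold natCeilDiv
    exact Nat.div_mul_le_self _ _
  set M : ℕ := q - 1 with hM_def
  have hMs : M * s ≤ k - 1 := by
    rw [hM_def, Nat.sub_one_mul]
    omega
  obtain ⟨T, hTrank, hTdef⟩ := outer M hMs
  -- extend to a maximal set of rank ≤ k - 1
  have hne : ((Finset.univ : Finset (Fin n)).powerset.filter fun U =>
      T ⊆ U ∧ finrank F (span F (rowFun C '' ↑U)) ≤ k - 1).Nonempty := by
    refine ⟨T, ?_⟩
    simp only [Finset.mem_filter, Finset.mem_powerset]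
    exact ⟨Finset.subset_univ _, le_refl _, by omega⟩
  obtain ⟨T'', hT''mem, hT''max⟩ := Finset.exists_max_image _ Finset.card hne
  simp only [Finset.mem_filter, Finset.mem_powerset] at hT''mem
  obtain ⟨-, hTT'', hT''rank⟩ := hT''mem
  -- T'' is not everything
  have hT''ne : T'' ≠ Finset.univ := by
    intro h
    rw [h, span_rows_top C hinj, finrank_top, finrank_dual_space] at hT''rank
    omega
  obtain ⟨j, hj⟩ : ∃ j, j ∉ T'' := by
    by_contra hc
    push_neg at hc
    exact hT''ne (Finset.eq_univ_iff_forall.mpr hc)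
  -- maximality forces rank exactly k - 1
  have hrankT'' : finrank F (span F (rowFun C '' ↑T'')) = k - 1 := by
    have hgt : ¬ (finrank F (span F (rowFun C '' ↑(T'' ∪ {j}))) ≤ k - 1) := by
      intro hle
      have hmem : T'' ∪ {j} ∈ (Finset.univ : Finset (Fin n)).powerset.filter
          fun U => T ⊆ U ∧ finrank F (span F (rowFun C '' ↑U)) ≤ k - 1 := by
        simp only [Finset.mem_filter, Finset.mem_powerset]
        exact ⟨Finset.subset_univ _,
          le_trans hTT'' (Finset.subset_union_left), hle⟩
      have := hT''max _ hmem
      have hcard : (T'' ∪ {j}).card = T''.card + 1 := by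
        rw [Finset.union_comm, ← Finset.insert_eq,
          Finset.card_insert_of_notMem hj]
      omega
    have h1 := rank_union_le C T'' ({j} : Finset (Fin n))
    simp only [Finset.card_singleton] at h1
    omega
  -- the defect carries over
  have hdefT'' : k - 1 + M * (β - 1) ≤ T''.card := by
    have h1 : T'' = T ∪ (T'' \ T) := by
      rw [Finset.union_sdiff_self_eq_union, Finset.union_eq_right.mpr hTT'']
    have h2 : finrank F (span F (rowFun C '' ↑T'')) ≤
        finrank F (span F (rowFun C '' ↑T)) + (T'' \ T).card := by
      conv_lhs => rw [h1]
      exact rank_union_le C T (T'' \ T)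
    have h3 : (T'' \ T).card = T''.card - T.card := Finset.card_sdiff_of_subset hTT''
    have h4 : T.card ≤ T''.card := Finset.card_le_card hTT''
    omega
  -- get a nonzero codeword vanishing on T''
  set W : Subspace F ((Fin k → F) →ₗ[F] F) := span F (rowFun C '' ↑T'') with hW_def
  have hWco : finrank F W.dualCoannihilator = 1 := by
    have h1 := Subspace.finrank_add_finrank_dualCoannihilator_eq W
    have h2 : finrank F (Fin k → F) = k := by simp
    rw [h2] at h1
    rw [hrankT''] at h1
    omega
  have hWne : W.dualCoannihilator ≠ ⊥ := by
    intro h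
    rw [h] at hWco
    simp at hWco
  obtain ⟨x, hxW, hx0⟩ := Submodule.exists_mem_ne_zero_of_ne_bot hWne
  have hCx : ∀ j' ∈ T'', C x j' = 0 := by
    intro j' hj'
    have hrow : rowFun C j' ∈ W :=
      subset_span ⟨j', Finset.mem_coe.mpr hj', rfl⟩
    have := (Submodule.mem_dualCoannihilator x).mp hxW _ hrow
    simpa [rowFun] using this
  have hdle : d ≤ hammingNorm (C x) := hd_le x hx0
  have hham : hammingNorm (C x) + T''.card ≤ n := by
    have hsub : ({j' | C x j' ≠ 0} : Finset (Fin n)) ⊆ T''ᶜ := by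
      intro j' hj'
      simp only [Finset.mem_filter, Finset.mem_univ, true_and] at hj'
      rw [Finset.mem_compl]
      intro hmem
      exact hj' (hCx j' hmem)
    have h1 : hammingNorm (C x) ≤ T''ᶜ.card := by
      rw [hammingNorm]
      exact Finset.card_le_card hsub
    have h2 : T''ᶜ.card = n - T''.card := by
      rw [Finset.card_compl]
      simp
    have h3 : T''.card ≤ n := by
      have := Finset.card_le_card (Finset.subset_univ T'')
      simpa using this
    omega
  have hcomm : (β - 1) * M = M * (β - 1) := mul_comm _ _
  rw [hcomm]
  omega
end

section
/- For every even k ≥ 2, the linear systematic binary code of length n = k + k/2 encoding x ∈ F_2^k to y with y_i = x_i for 1 ≤ i ≤ k and y_{k+j} = x_{2j−1} + x_{2j} for 1 ≤ j ≤ k/2 is a (k, 3k/2, 2, 2) batch code with minimum distance 2, and it attains the bound n ≥ ⌈k/2⌉ + k + d − 2 with equality. -/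
set_option maxHeartbeats 1000000

/-- Auxiliary: to give a `(·, ·, 2, 2)` batch structure for a query `f : Fin 2 → Fin k`,
it suffices to give two disjoint recovery sets of size at most 2. -/
lemma batch_pair_aux {σ : Type*} {k n : ℕ} (C : (Fin k → σ) → (Fin n → σ))
    (f : Fin 2 → Fin k) (S₀ S₁ : Finset (Fin n)) (hd : Disjoint S₀ S₁)
    (hc₀ : S₀.card ≤ 2) (hc₁ : S₁.card ≤ 2)
    (hr₀ : IsRecoverySet C (f 0) S₀) (hr₁ : IsRecoverySet C (f 1) S₁) :
    ∃ S : Fin 2 → Finset (Fin n),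
      (∀ a b : Fin 2, a ≠ b → Disjoint (S a) (S b)) ∧ (∀ a, (S a).card ≤ 2) ∧
      (∀ a, IsRecoverySet C (f a) (S a)) := by
  refine ⟨![S₀, S₁], ?_, ?_, ?_⟩
  · intro a b hab
    fin_cases a <;> fin_cases b
    · exact absurd rfl hab
    · exact hd
    · exact hd.symm
    · exact absurd rfl hab
  · intro a; fin_cases a
    · exact hc₀
    · exact hc₁
  · intro a; fin_cases a
    · exact hr₀
    · exact hr₁

/-- For even `k ≥ 2`, the systematic binary code of length `n = k + k/2` appending
to `x` the parities `x_{2j−1} + x_{2j}` is a `(k, 3k/2, 2, 2)` batch code with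
minimum distance `2`, attaining `n ≥ ⌈k/2⌉ + k + d − 2` with equality. -/
theorem stmt_9 (k : ℕ) (hk : 2 ≤ k) (hke : k % 2 = 0)
    (C : (Fin k → ZMod 2) → (Fin (k + k / 2) → ZMod 2))
    (hsys : ∀ x : Fin k → ZMod 2, ∀ i : Fin k,
      C x ⟨i.val, by have := i.isLt; omega⟩ = x i)
    (hpar : ∀ x : Fin k → ZMod 2, ∀ j : Fin (k / 2),
      C x ⟨k + j.val, by have := j.isLt; omega⟩ =
        x ⟨2 * j.val, by have := j.isLt; omega⟩ +
        x ⟨2 * j.val + 1, by have := j.isLt; omega⟩) :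
    IsBatchCode C 2 2 ∧
    (∀ x₁ x₂ : Fin k → ZMod 2, x₁ ≠ x₂ → 2 ≤ hammingDist (C x₁) (C x₂)) ∧
    (∃ x₁ x₂ : Fin k → ZMod 2, x₁ ≠ x₂ ∧ hammingDist (C x₁) (C x₂) = 2) ∧
    k + k / 2 = k / 2 + k + 2 - 2 := by
  have hZ : ∀ a b c : ZMod 2, a + c = b + c → a = b := by decide
  -- recovery of coordinate i from its systematic position
  have hrec1 : ∀ (i : Fin k), IsRecoverySet C i
      ({⟨i.val, by have := i.isLt; omega⟩} : Finset (Fin (k + k / 2))) := by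
    intro i x₁ x₂ h
    have := h ⟨i.val, by have := i.isLt; omega⟩ (by simp)
    rwa [hsys, hsys] at this
  -- recovery of coordinate i from its partner's systematic position and the parity check
  have hrec2 : ∀ (i : Fin k), IsRecoverySet C i
      ({⟨2 * (i.val / 2) + (1 - i.val % 2), by have := i.isLt; omega⟩,
        ⟨k + i.val / 2, by have := i.isLt; omega⟩} : Finset (Fin (k + k / 2))) := by
    intro i x₁ x₂ h
    have hj : i.val / 2 < k / 2 := by have := i.isLt; omega
    have hpk : 2 * (i.val / 2) + (1 - i.val % 2) < k := by have := i.isLt; omega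
    set p : Fin k := ⟨2 * (i.val / 2) + (1 - i.val % 2), hpk⟩ with hp
    have hpe : x₁ p = x₂ p := by
      have := h ⟨2 * (i.val / 2) + (1 - i.val % 2), by omega⟩ (by simp)
      rw [← hsys x₁ p, ← hsys x₂ p]
      exact this
    have hpar' := h ⟨k + i.val / 2, by omega⟩ (by simp)
    rw [hpar x₁ ⟨i.val / 2, hj⟩, hpar x₂ ⟨i.val / 2, hj⟩] at hpar'
    rcases Nat.mod_two_eq_zero_or_one i.val with hm | hm
    · have hia : (⟨2 * (i.val / 2), by have := i.isLt; omega⟩ : Fin k) = i := by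
        apply Fin.ext; simp; omega
      have hpb : (⟨2 * (i.val / 2) + 1, by omega⟩ : Fin k) = p := by
        apply Fin.ext; simp [hp]; omega
      rw [hia, hpb] at hpar'
      rw [hpe] at hpar'
      exact hZ _ _ _ hpar'
    · have hia : (⟨2 * (i.val / 2) + 1, by omega⟩ : Fin k) = i := by
        apply Fin.ext; simp; omega
      have hpb : (⟨2 * (i.val / 2), by have := i.isLt; omega⟩ : Fin k) = p := by
        apply Fin.ext; simp [hp]; omega
      rw [hia, hpb] at hpar'
      rw [hpe, add_comm (x₂ p), add_comm (x₂ p)] at hpar'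
      exact hZ _ _ _ hpar'
  refine ⟨?_, ?_, ?_, by omega⟩
  · -- batch code property
    intro f
    by_cases hf : f 0 = f 1
    · refine batch_pair_aux C f
        ({⟨(f 0).val, by have := (f 0).isLt; omega⟩} : Finset (Fin (k + k / 2)))
        ({⟨2 * ((f 1).val / 2) + (1 - (f 1).val % 2), by have := (f 1).isLt; omega⟩,
          ⟨k + (f 1).val / 2, by have := (f 1).isLt; omega⟩} : Finset (Fin (k + k / 2)))
        ?_ (by simp) ?_ (hrec1 (f 0)) (hrec2 (f 1))
      · have hv : (f 0).val = (f 1).val := by rw [hf]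
        have hlt0 := (f 0).isLt
        have hlt1 := (f 1).isLt
        rw [Finset.disjoint_left]
        intro m hm1 hm2
        rw [Finset.mem_singleton] at hm1
        subst hm1
        rcases Finset.mem_insert.mp hm2 with h | h
        · have := congrArg Fin.val h; simp at this; omega
        · rw [Finset.mem_singleton] at h
          have := congrArg Fin.val h; simp at this; omega
      · exact (Finset.card_insert_le _ _).trans (by simp)
    · refine batch_pair_aux C f
        ({⟨(f 0).val, by have := (f 0).isLt; omega⟩} : Finset (Fin (k + k / 2)))
        ({⟨(f 1).val, by have := (f 1).isLt; omega⟩} : Finset (Fin (k + k / 2)))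
        ?_ (by simp) (by simp) (hrec1 (f 0)) (hrec1 (f 1))
      have hv : (f 0).val ≠ (f 1).val := fun h => hf (Fin.ext h)
      rw [Finset.disjoint_left]
      intro m hm1 hm2
      rw [Finset.mem_singleton] at hm1
      rw [Finset.mem_singleton] at hm2
      subst hm1
      have := congrArg Fin.val hm2
      simp at this
      exact hv this
  · -- minimum distance at least 2
    intro x₁ x₂ hne
    obtain ⟨i, hi⟩ := Function.ne_iff.mp hne
    refine Nat.succ_le_of_lt ?_
    unfold hammingDist
    rw [Finset.one_lt_card]
    set p : Fin k := ⟨2 * (i.val / 2) + (1 - i.val % 2), by have := i.isLt; omega⟩ with hp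
    by_cases hpd : x₁ p = x₂ p
    · -- the systematic position of i and the parity position differ
      refine ⟨⟨i.val, by have := i.isLt; omega⟩, ?_,
        ⟨k + i.val / 2, by have := i.isLt; omega⟩, ?_, ?_⟩
      · simp only [Finset.mem_filter, Finset.mem_univ, true_and]
        rw [hsys, hsys]; exact hi
      · simp only [Finset.mem_filter, Finset.mem_univ, true_and]
        have hj : i.val / 2 < k / 2 := by have := i.isLt; omega
        rw [hpar x₁ ⟨i.val / 2, hj⟩, hpar x₂ ⟨i.val / 2, hj⟩]
        rcases Nat.mod_two_eq_zero_or_one i.val with hm | hm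
        · have hia : (⟨2 * (i.val / 2), by have := i.isLt; omega⟩ : Fin k) = i := by
            apply Fin.ext; simp; omega
          have hpb : (⟨2 * (i.val / 2) + 1, by have := i.isLt; omega⟩ : Fin k) = p := by
            apply Fin.ext; simp [hp]; omega
          rw [hia, hpb, hpd]
          intro hcon; exact hi (hZ _ _ _ hcon)
        · have hia : (⟨2 * (i.val / 2) + 1, by have := i.isLt; omega⟩ : Fin k) = i := by
            apply Fin.ext; simp; omega
          have hpb : (⟨2 * (i.val / 2), by have := i.isLt; omega⟩ : Fin k) = p := by
            apply Fin.ext; simp [hp]; omega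
          rw [hia, hpb, hpd]
          intro hcon
          rw [add_comm (x₂ p), add_comm (x₂ p)] at hcon
          exact hi (hZ _ _ _ hcon)
      · intro hcon
        have := congrArg Fin.val hcon; simp at this; omega
    · -- the systematic positions of i and its partner differ
      refine ⟨⟨i.val, by have := i.isLt; omega⟩, ?_,
        ⟨p.val, by have := p.isLt; omega⟩, ?_, ?_⟩
      · simp only [Finset.mem_filter, Finset.mem_univ, true_and]
        rw [hsys, hsys]; exact hi
      · simp only [Finset.mem_filter, Finset.mem_univ, true_and]
        intro hcon
        apply hpd
        rw [← hsys x₁ p, ← hsys x₂ p]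
        exact hcon
      · intro hcon
        have := congrArg Fin.val hcon; simp [hp] at this
        have := i.isLt; omega
  · -- distance exactly 2 is achieved
    refine ⟨0, (fun i => if i.val < 2 then 1 else 0), ?_, ?_⟩
    · intro h
      have := congrFun h ⟨0, by omega⟩
      simp at this
    · unfold hammingDist
      have hset : (Finset.univ.filter
          (fun m => C 0 m ≠ C (fun i => if i.val < 2 then 1 else 0) m))
          = {(⟨0, by omega⟩ : Fin (k + k / 2)), ⟨1, by omega⟩} := by
        ext m
        simp only [Finset.mem_filter, Finset.mem_univ, true_and, Finset.mem_insert,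
          Finset.mem_singleton]
        constructor
        · intro hm
          by_contra hcon
          push_neg at hcon
          apply hm
          by_cases hlt : m.val < k
          · have hmeq : m = ⟨(⟨m.val, hlt⟩ : Fin k).val, by omega⟩ := rfl
            rw [hmeq, hsys, hsys]
            have h0 : m.val ≠ 0 := fun h => hcon.1 (Fin.ext h)
            have h1 : m.val ≠ 1 := fun h => hcon.2 (Fin.ext h)
            have hn : ¬ ((⟨m.val, hlt⟩ : Fin k).val < 2) := by simp; omega
            rw [if_neg hn]
            simp
          · have hj : m.val - k < k / 2 := by have := m.isLt; omega
            have hmeq : m = ⟨k + (⟨m.val - k, hj⟩ : Fin (k / 2)).val, by omega⟩ := by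
              apply Fin.ext; simp; omega
            rw [hmeq, hpar, hpar]
            simp only [Pi.zero_apply, add_zero, zero_add]
            by_cases h2 : m.val - k = 0
            · simp [h2]; decide
            · have hb1 : ¬ (2 * (m.val - k) < 2) := by omega
              have hb2 : ¬ (2 * (m.val - k) + 1 < 2) := by omega
              simp [hb1, hb2]
        · intro hm
          rcases hm with hm | hm <;> subst hm
          · have hmeq : (⟨0, by omega⟩ : Fin (k + k / 2)) =
                ⟨((⟨0, by omega⟩ : Fin k)).val, by omega⟩ := rfl
            rw [hmeq, hsys, hsys]
            simp
          · have hmeq : (⟨1, by omega⟩ : Fin (k + k / 2)) =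
                ⟨((⟨1, by omega⟩ : Fin k)).val, by omega⟩ := rfl
            rw [hmeq, hsys, hsys]
            simp
      rw [show (Finset.filter
          (fun m => C 0 m ≠ C (fun i => if i.val < 2 then 1 else 0) m) Finset.univ)
          = _ from hset]
      rw [Finset.card_insert_of_notMem (by simp), Finset.card_singleton]
end

section
/- The binary linear code with generator matrix G = [[1,0,0,1,1,0,1],[0,1,0,1,0,1,1],[0,0,1,0,1,1,1]] (the [7,3,4] simplex code) is a systematic (3,7,2,4) batch code with minimum distance 4: any multiset of 4 indices from {1,2,3} can be recovered from pairwise disjoint recovery sets of size at most 2. -/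
def myC : (Fin 3 → ZMod 2) → (Fin 7 → ZMod 2) := fun x =>
  Matrix.vecMul x !![1,0,0,1,1,0,1; 0,1,0,1,0,1,1; 0,0,1,0,1,1,1]

def fam : Fin 3 → List (Finset (Fin 7)) :=
  ![[{0}, {1,3}, {2,4}, {5,6}],
    [{1}, {0,3}, {2,5}, {4,6}],
    [{2}, {0,4}, {1,5}, {3,6}]]

/-- choice of recovery-set lists depending on the multiplicity vector -/
def lists : ℕ → ℕ → ℕ → Fin 3 → List (Finset (Fin 7))
  | 4, 0, 0 => ![[{0}, {1,3}, {2,4}, {5,6}], [], []]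
  | 0, 4, 0 => ![[], [{1}, {0,3}, {2,5}, {4,6}], []]
  | 0, 0, 4 => ![[], [], [{2}, {0,4}, {1,5}, {3,6}]]
  | 3, 1, 0 => ![[{0}, {2,4}, {5,6}], [{1}], []]
  | 3, 0, 1 => ![[{0}, {1,3}, {5,6}], [], [{2}]]
  | 1, 3, 0 => ![[{0}], [{1}, {2,5}, {4,6}], []]
  | 0, 3, 1 => ![[], [{1}, {0,3}, {4,6}], [{2}]]
  | 1, 0, 3 => ![[{0}], [], [{2}, {1,5}, {3,6}]]
  | 0, 1, 3 => ![[], [{1}], [{2}, {0,4}, {3,6}]]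
  | 2, 2, 0 => ![[{0}, {1,3}], [{2,5}, {4,6}], []]
  | 2, 0, 2 => ![[{0}, {2,4}], [], [{1,5}, {3,6}]]
  | 0, 2, 2 => ![[], [{0,3}, {4,6}], [{2}, {1,5}]]
  | 2, 1, 1 => ![[{0}, {5,6}], [{1}], [{2}]]
  | 1, 2, 1 => ![[{0}], [{1}, {4,6}], [{2}]]
  | 1, 1, 2 => ![[{0}], [{1}], [{2}, {3,6}]]
  | _, _, _ => ![[], [], []]

def cnt (f : Fin 4 → Fin 3) (i : Fin 3) : ℕ :=
  (Finset.univ.filter (fun b => f b = i)).card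

def rnk (f : Fin 4 → Fin 3) (a : Fin 4) : ℕ :=
  (Finset.univ.filter (fun b => b < a ∧ f b = f a)).card

def mySets (f : Fin 4 → Fin 3) (a : Fin 4) : Finset (Fin 7) :=
  (lists (cnt f 0) (cnt f 1) (cnt f 2) (f a)).getD (rnk f a) ∅

theorem combin : ∀ f : Fin 4 → Fin 3,
    (∀ a b : Fin 4, a ≠ b → Disjoint (mySets f a) (mySets f b)) ∧
    (∀ a, (mySets f a).card ≤ 2) ∧
    (∀ a, mySets f a ∈ fam (f a)) := by decide

set_option maxRecDepth 10000 in
theorem recLem' : ∀ i : Fin 3, ∀ S ∈ fam i, ∀ x₁ x₂ : Fin 3 → ZMod 2,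
    (∀ j ∈ S, myC x₁ j = myC x₂ j) → x₁ i = x₂ i := by decide

theorem recLem : ∀ i : Fin 3, ∀ S ∈ fam i, IsRecoverySet myC i S :=
  fun i S h => recLem' i S h

theorem part1 : IsBatchCode myC 2 4 := by
  intro f
  obtain ⟨h1, h2, h3⟩ := combin f
  exact ⟨mySets f, h1, h2, fun a => recLem (f a) _ (h3 a)⟩

theorem part2 : ∀ x : Fin 3 → ZMod 2, ∀ i : Fin 3,
    myC x (Fin.castLE (by norm_num) i) = x i := by decide

theorem part3 : ∀ x : Fin 3 → ZMod 2, x ≠ 0 → 4 ≤ hammingNorm (myC x) := by decide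

theorem part4 : ∃ x : Fin 3 → ZMod 2, x ≠ 0 ∧ hammingNorm (myC x) = 4 := by decide

/-- The `[7,3,4]` binary simplex code with the given generator matrix is a
systematic `(3,7,2,4)` batch code with minimum distance `4`. -/
theorem stmt_10 :
    let G : Matrix (Fin 3) (Fin 7) (ZMod 2) :=
      !![1,0,0,1,1,0,1; 0,1,0,1,0,1,1; 0,0,1,0,1,1,1]
    let C : (Fin 3 → ZMod 2) → (Fin 7 → ZMod 2) := fun x => Matrix.vecMul x G
    IsBatchCode C 2 4 ∧
    (∀ x : Fin 3 → ZMod 2, ∀ i : Fin 3, C x (Fin.castLE (by norm_num) i) = x i) ∧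
    (∀ x : Fin 3 → ZMod 2, x ≠ 0 → 4 ≤ hammingNorm (C x)) ∧
    (∃ x : Fin 3 → ZMod 2, x ≠ 0 ∧ hammingNorm (C x) = 4) := by
  exact ⟨part1, part2, part3, part4⟩
end

section
/- Let C be a linear code over F_q of length n', dimension k', and minimum distance d with d > (1 − 1/q)n'. Then q^{k'} · (qd − (q−1)n') ≤ qd (the Plotkin bound). -/
/-- Plotkin bound: a linear code `C ⊆ F_q^{n'}` of dimension `k'` and minimum
distance `d` with `d > (1 − 1/q)n'` satisfies `q^{k'}(qd − (q−1)n') ≤ qd`. -/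
theorem stmt_16 {F : Type*} [Field F] [Fintype F] [DecidableEq F] {n' d : ℕ}
    (C : Submodule F (Fin n' → F))
    (hd_le : ∀ x ∈ C, x ≠ 0 → d ≤ hammingNorm x)
    (hd_eq : ∃ x ∈ C, x ≠ 0 ∧ hammingNorm x = d)
    (hplot : ((Fintype.card F : ℤ) - 1) * n' < (Fintype.card F : ℤ) * d) :
    (Fintype.card F : ℤ) ^ (Module.finrank F C) *
        ((Fintype.card F : ℤ) * d - ((Fintype.card F : ℤ) - 1) * n') ≤
      (Fintype.card F : ℤ) * d := by
  classical
  set q := Fintype.card F with hq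
  set M := Fintype.card C with hM
  have hMpos : 0 < M := Fintype.card_pos
  have hcard : M = q ^ Module.finrank F C := Module.card_eq_pow_finrank
  -- per-coordinate kernel bound: M ≤ q * #{x ∈ C : x i = 0}
  have key : ∀ i : Fin n',
      M ≤ q * (Finset.univ.filter (fun x : C => (x : Fin n' → F) i = 0)).card := by
    intro i
    set f : C →ₗ[F] F := (LinearMap.proj i).comp C.subtype with hf
    have h1 : Nat.card C = Nat.card (LinearMap.ker f) * Nat.card (C ⧸ LinearMap.ker f) :=
      Submodule.card_eq_card_quotient_mul_card _
    have h2 : Nat.card (C ⧸ LinearMap.ker f) = Nat.card (LinearMap.range f) :=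
      Nat.card_congr f.quotKerEquivRange.toEquiv
    have h3 : Nat.card (LinearMap.range f) ≤ q := by
      have := Nat.card_le_card_of_injective (Subtype.val : LinearMap.range f → F)
        Subtype.val_injective
      simpa [Nat.card_eq_fintype_card, hq] using this
    have h4 : Nat.card (LinearMap.ker f)
        = (Finset.univ.filter (fun x : C => (x : Fin n' → F) i = 0)).card := by
      have he : Nat.card (LinearMap.ker f)
          = Nat.card {x : C // (x : Fin n' → F) i = 0} := by
        refine Nat.card_congr (Equiv.subtypeEquivRight fun x => ?_)
        simp [hf, LinearMap.mem_ker]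
      rw [he, Nat.card_eq_fintype_card, Fintype.card_subtype]
    rw [Nat.card_eq_fintype_card, ← hM, h2, h4] at h1
    calc M = (Finset.univ.filter (fun x : C => (x : Fin n' → F) i = 0)).card
          * Nat.card (LinearMap.range f) := h1
      _ ≤ _ * q := Nat.mul_le_mul_left _ h3
      _ = q * _ := Nat.mul_comm _ _
  -- double counting the total Hamming weight
  have hsum : ∑ x : C, hammingNorm (x : Fin n' → F)
      = ∑ i : Fin n', (Finset.univ.filter (fun x : C => (x : Fin n' → F) i ≠ 0)).card := by
    simp only [hammingNorm, Finset.card_filter]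
    rw [Finset.sum_comm]
  -- lower bound on the total weight
  have hA : (M - 1) * d ≤ ∑ x : C, hammingNorm (x : Fin n' → F) := by
    have hsub : (Finset.univ.erase (0 : C)) ⊆ Finset.univ := Finset.erase_subset _ _
    have h1 : (M - 1) * d = (Finset.univ.erase (0 : C)).card * d := by
      rw [Finset.card_erase_of_mem (Finset.mem_univ _), Finset.card_univ]
    rw [h1]
    calc (Finset.univ.erase (0 : C)).card * d
        = (Finset.univ.erase (0 : C)).card • d := rfl
      _ ≤ ∑ x ∈ Finset.univ.erase (0 : C), hammingNorm (x : Fin n' → F) := by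
          refine Finset.card_nsmul_le_sum _ _ _ fun x hx => ?_
          have hx0 : x ≠ 0 := Finset.ne_of_mem_erase hx
          exact hd_le x x.2 (fun h => hx0 (Subtype.ext h))
      _ ≤ ∑ x : C, hammingNorm (x : Fin n' → F) :=
          Finset.sum_le_sum_of_subset hsub
  -- upper bound on the total weight: q * S ≤ (q-1) * n' * M
  have hB : (q : ℤ) * ∑ x : C, (hammingNorm (x : Fin n' → F) : ℤ)
      ≤ ((q : ℤ) - 1) * n' * M := by
    have hcast : (∑ x : C, (hammingNorm (x : Fin n' → F) : ℤ))
        = ∑ i : Fin n',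
            ((Finset.univ.filter (fun x : C => (x : Fin n' → F) i ≠ 0)).card : ℤ) := by
      rw [← Nat.cast_sum, hsum, Nat.cast_sum]
    rw [hcast, Finset.mul_sum]
    calc ∑ i : Fin n', (q : ℤ) *
          ((Finset.univ.filter (fun x : C => (x : Fin n' → F) i ≠ 0)).card : ℤ)
        ≤ ∑ _i : Fin n', ((q : ℤ) - 1) * M := by
          refine Finset.sum_le_sum fun i _ => ?_
          have hsplit : (Finset.univ.filter (fun x : C => (x : Fin n' → F) i = 0)).card
              + (Finset.univ.filter (fun x : C => (x : Fin n' → F) i ≠ 0)).card = M := by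
            rw [hM, ← Finset.card_univ]
            exact Finset.card_filter_add_card_filter_not _
          have hk := key i
          have h1 : ((Finset.univ.filter (fun x : C => (x : Fin n' → F) i = 0)).card : ℤ)
              + ((Finset.univ.filter (fun x : C => (x : Fin n' → F) i ≠ 0)).card : ℤ)
              = M := by exact_mod_cast congrArg (Nat.cast : ℕ → ℤ) hsplit
          have h2 : (M : ℤ) ≤ (q : ℤ) *
              ((Finset.univ.filter (fun x : C => (x : Fin n' → F) i = 0)).card : ℤ) := by
            exact_mod_cast hk
          nlinarith [Nat.cast_nonneg (α := ℤ)
            (Finset.univ.filter (fun x : C => (x : Fin n' → F) i ≠ 0)).card]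
      _ = ((q : ℤ) - 1) * n' * M := by
          rw [Finset.sum_const, Finset.card_univ, Fintype.card_fin]
          ring
  -- combine
  have hAz : ((M : ℤ) - 1) * d ≤ ∑ x : C, (hammingNorm (x : Fin n' → F) : ℤ) := by
    have := hA
    have h1 : ((M - 1 : ℕ) : ℤ) = (M : ℤ) - 1 := by
      rw [Nat.cast_sub hMpos]; norm_num
    calc ((M : ℤ) - 1) * d = ((M - 1 : ℕ) : ℤ) * d := by rw [h1]
      _ ≤ ∑ x : C, (hammingNorm (x : Fin n' → F) : ℤ) := by
          rw [← Nat.cast_sum]; exact_mod_cast this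
  have hqpos : (0 : ℤ) < q := by exact_mod_cast Fintype.card_pos
  have hmain : (q : ℤ) * (((M : ℤ) - 1) * d) ≤ ((q : ℤ) - 1) * n' * M :=
    le_trans (by nlinarith) hB
  have hMz : ((q : ℤ)) ^ Module.finrank F C = (M : ℤ) := by exact_mod_cast hcard.symm
  rw [hMz]
  have hM1 : (1 : ℤ) ≤ M := by exact_mod_cast hMpos
  nlinarith [hmain]
end
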